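/- Let d ≥ 2, let π, π̂ : ℝ^d_{++} → ℝ both be convex, continuous, and positively homogeneous of degree 1, and let P̄ ⊆ ℝ^d_{++} be nonempty, convex, and compact. Define Y_P̄ = {y ∈ ℝ^d : p·y ≤ π(p) for all p ∈ P̄} and Ŷ_P̄ = {y ∈ ℝ^d : p·y ≤ π̂(p) for all p ∈ P̄}. Then d_H(Y_P̄, Ŷ_P̄) = sup_{p∈P̄} |π(p) − π̂(p)| / ‖p‖. -/

import Mathlib

open scoped RealInnerProductSpace
open Metric Set Filter
open scoped Topology

/-- The strictly positive orthant of `ℝ^d`. -/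
def posOrthant (d : ℕ) : Set (EuclideanSpace ℝ (Fin d)) := {p | ∀ i, 0 < p i}

lemma posOrthant_isOpen (d : ℕ) : IsOpen (posOrthant d) := by
  have : posOrthant d = ⋂ i : Fin d, {p : EuclideanSpace ℝ (Fin d) | 0 < p i} := by
    ext p; simp [posOrthant, Set.mem_iInter]
  rw [this]
  exact isOpen_iInter_of_finite fun i =>
    isOpen_lt continuous_const ((continuous_apply i).comp (PiLp.continuous_ofLp 2 _))

lemma posOrthant_convex (d : ℕ) : Convex ℝ (posOrthant d) := by
  intro x hx y hy a b ha hb hab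
  intro i
  have hx' := hx i
  have hy' := hy i
  have : (a • x + b • y) i = a * x i + b * y i := rfl
  rw [this]
  rcases eq_or_lt_of_le ha with h | h
  · have hb1 : b = 1 := by linarith
    simp [← h, hb1]; nlinarith
  · nlinarith [mul_nonneg hb hy'.le]

lemma posOrthant_smul_mem {d : ℕ} {p : EuclideanSpace ℝ (Fin d)} (hp : p ∈ posOrthant d)
    {l : ℝ} (hl : 0 < l) : l • p ∈ posOrthant d := by
  intro i
  have : (l • p) i = l * p i := rfl
  rw [this]; exact mul_pos hl (hp i)

lemma posOrthant_ne_zero {d : ℕ} (hd : 1 ≤ d) {p : EuclideanSpace ℝ (Fin d)}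
    (hp : p ∈ posOrthant d) : p ≠ 0 := by
  intro h
  have := hp ⟨0, hd⟩
  rw [h] at this
  simp at this

lemma posOrthant_norm_pos {d : ℕ} (hd : 1 ≤ d) {p : EuclideanSpace ℝ (Fin d)}
    (hp : p ∈ posOrthant d) : 0 < ‖p‖ :=
  norm_pos_iff.mpr (posOrthant_ne_zero hd hp)

/-- Existence of a subgradient-type supporting point for a convex continuous
positively homogeneous function on the positive orthant. -/
private lemma aux_div_neg_mul (X c : ℝ) (hc : c ≠ 0) : X / (-c) * c = -X := by
  rw [div_mul_eq_mul_div, mul_div_assoc, div_neg, div_self hc]; ring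

private lemma aux_inv_neg_mul (y c : ℝ) (hc : c ≠ 0) : (-c)⁻¹ * (y * c) = -y := by
  rw [inv_neg, mul_comm y c, neg_mul, ← mul_assoc, inv_mul_cancel₀ hc]; ring

lemma exists_support_point {d : ℕ} (f : EuclideanSpace ℝ (Fin d) → ℝ)
    (hconv : ConvexOn ℝ (posOrthant d) f)
    (hcont : ContinuousOn f (posOrthant d))
    (hhom : ∀ p ∈ posOrthant d, ∀ l : ℝ, 0 < l → f (l • p) = l * f p)
    {q : EuclideanSpace ℝ (Fin d)} (hq : q ∈ posOrthant d) :
    ∃ z, (∀ p ∈ posOrthant d, ⟪p, z⟫ ≤ f p) ∧ ⟪q, z⟫ = f q := by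
  classical
  set A : Set (EuclideanSpace ℝ (Fin d) × ℝ) := {x | x.1 ∈ posOrthant d ∧ f x.1 < x.2} with hA
  have hAconv : Convex ℝ A := by
    rintro x ⟨hx1, hx2⟩ y ⟨hy1, hy2⟩ a b ha hb hab
    refine ⟨posOrthant_convex d hx1 hy1 ha hb hab, ?_⟩
    have h1 : f (a • x.1 + b • y.1) ≤ a * f x.1 + b * f y.1 := by
      have := hconv.2 hx1 hy1 ha hb hab
      simpa [smul_eq_mul] using this
    have h2 : (a • x + b • y).2 = a * x.2 + b * y.2 := rfl
    have h3 : (a • x + b • y).1 = a • x.1 + b • y.1 := rfl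
    rw [h2, h3]
    rcases lt_or_ge 0 a with hpa | hpa
    · have e1 := mul_le_mul_of_nonneg_left hy2.le hb
      have e2 := mul_lt_mul_of_pos_left hx2 hpa
      linarith
    · have ha0 : a = 0 := le_antisymm hpa ha
      have hb1 : b = 1 := by linarith
      subst ha0; subst hb1; simpa using h1.trans_lt (by simpa using hy2)
  have hAopen : IsOpen A := by
    rw [isOpen_iff_mem_nhds]
    rintro ⟨p, t⟩ ⟨hp, hft⟩
    have hca : ContinuousAt f p :=
      hcont.continuousAt ((posOrthant_isOpen d).mem_nhds hp)
    have hU : {u : EuclideanSpace ℝ (Fin d) | u ∈ posOrthant d ∧ f u < (f p + t) / 2} ∈ 𝓝 p := by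
      refine Filter.inter_mem ((posOrthant_isOpen d).mem_nhds hp) ?_
      exact hca.preimage_mem_nhds (isOpen_Iio.mem_nhds (by simpa using by linarith))
    have hT : Ioi ((f p + t) / 2) ∈ 𝓝 t := isOpen_Ioi.mem_nhds (by simpa using by linarith)
    refine Filter.mem_of_superset (by rw [nhds_prod_eq]; exact Filter.prod_mem_prod hU hT) ?_
    rintro ⟨u, s⟩ ⟨⟨hu1, hu2⟩, hs⟩
    exact ⟨hu1, lt_trans hu2 hs⟩
  have hqA : (q, f q) ∉ A := fun h => lt_irrefl _ h.2
  obtain ⟨L, hL⟩ := geometric_hahn_banach_open_point hAconv hAopen hqA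
  set c : ℝ := L (0, 1) with hc
  have hcneg : c < 0 := by
    have h1 : ((q, f q + 1) : EuclideanSpace ℝ (Fin d) × ℝ) ∈ A :=
      ⟨hq, show f q < f q + 1 by linarith⟩
    have := hL _ h1
    have hsplit : ((q, f q + 1) : EuclideanSpace ℝ (Fin d) × ℝ) = (q, f q) + (1 : ℝ) • ((0 : EuclideanSpace ℝ (Fin d)), (1 : ℝ)) := by
      simp [Prod.ext_iff]
    rw [hsplit, map_add, map_smul] at this
    simpa [hc] using this
  set w : EuclideanSpace ℝ (Fin d) := (InnerProductSpace.toDual ℝ (EuclideanSpace ℝ (Fin d))).symm (L.comp (ContinuousLinearMap.inl ℝ (EuclideanSpace ℝ (Fin d)) ℝ)) with hw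
  have hwspec : ∀ x : EuclideanSpace ℝ (Fin d), ⟪w, x⟫ = L (x, 0) := by
    intro x
    rw [hw]
    exact InnerProductSpace.toDual_symm_apply
  have hsplit : ∀ (x : EuclideanSpace ℝ (Fin d)) (t : ℝ), L (x, t) = ⟪w, x⟫ + t * c := by
    intro x t
    have : ((x, t) : EuclideanSpace ℝ (Fin d) × ℝ) = (x, 0) + t • ((0 : EuclideanSpace ℝ (Fin d)), (1 : ℝ)) := by simp [Prod.ext_iff]
    rw [this, map_add, map_smul, hwspec, hc]
    ring_nf
  -- key inequality in limit form
  have hkey : ∀ p ∈ posOrthant d, ⟪w, p⟫ + f p * c ≤ ⟪w, q⟫ + f q * c := by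
    intro p hp
    by_contra hcon
    push_neg at hcon
    set s : ℝ := (⟪w, p⟫ + f p * c - (⟪w, q⟫ + f q * c)) / (-c) with hs
    have hspos : 0 < s := div_pos (by linarith) (by linarith)
    have hmem : ((p, f p + s) : EuclideanSpace ℝ (Fin d) × ℝ) ∈ A :=
      ⟨hp, show f p < f p + s by linarith⟩
    have hlt := hL _ hmem
    rw [hsplit, hsplit] at hlt
    have hcne : c ≠ 0 := ne_of_lt hcneg
    have hsc : s * c = -(⟪w, p⟫ + f p * c - (⟪w, q⟫ + f q * c)) := by
      rw [hs]; exact aux_div_neg_mul _ _ hcne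
    nlinarith
  set z : EuclideanSpace ℝ (Fin d) := (-c)⁻¹ • w with hz
  have hsub : ∀ p ∈ posOrthant d, f q + ⟪z, p⟫ - ⟪z, q⟫ ≤ f p := by
    intro p hp
    have h := hkey p hp
    have hzin : ∀ x : EuclideanSpace ℝ (Fin d), ⟪z, x⟫ = (-c)⁻¹ * ⟪w, x⟫ := fun x => real_inner_smul_left _ _ _
    rw [hzin, hzin]
    have hcne : c ≠ 0 := ne_of_lt hcneg
    have hinv : (0:ℝ) ≤ (-c)⁻¹ := inv_nonneg.2 (by linarith)
    have h1 : ⟪w, p⟫ - ⟪w, q⟫ ≤ (f q - f p) * c := by linarith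
    have h2 := mul_le_mul_of_nonneg_left h1 hinv
    have e : (-c)⁻¹ * ((f q - f p) * c) = f p - f q := by
      rw [aux_inv_neg_mul _ _ hcne]; ring
    rw [e] at h2
    linarith
  have hzq : ⟪z, q⟫ = f q := by
    have h2 := hsub ((2:ℝ) • q) (posOrthant_smul_mem hq (by norm_num : (0:ℝ) < 2))
    have hhalf := hsub (((1:ℝ)/2) • q) (posOrthant_smul_mem hq (by norm_num : (0:ℝ) < 1/2))
    rw [hhom q hq 2 (by norm_num)] at h2
    rw [hhom q hq (1/2) (by norm_num)] at hhalf
    have e2 : ⟪z, (2:ℝ) • q⟫ = 2 * ⟪z, q⟫ := real_inner_smul_right _ _ _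
    have eh : ⟪z, ((1:ℝ)/2) • q⟫ = (1/2) * ⟪z, q⟫ := real_inner_smul_right _ _ _
    rw [e2] at h2; rw [eh] at hhalf
    linarith
  refine ⟨z, fun p hp => ?_, by rw [real_inner_comm]; exact hzq⟩
  rw [real_inner_comm]
  have := hsub p hp
  rw [hzq] at this
  linarith

lemma exists_close_point {d : ℕ} (hd : 1 ≤ d) (g : EuclideanSpace ℝ (Fin d) → ℝ)
    (hgconv : ConvexOn ℝ (posOrthant d) g) (hgcont : ContinuousOn g (posOrthant d))
    (hghom : ∀ p ∈ posOrthant d, ∀ l : ℝ, 0 < l → g (l • p) = l * g p)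
    (Pb : Set (EuclideanSpace ℝ (Fin d))) (hPbne : Pb.Nonempty)
    (hPbconv : Convex ℝ Pb) (hPbcomp : IsCompact Pb) (hPbpos : Pb ⊆ posOrthant d)
    {ε : ℝ} (hε0 : 0 ≤ ε) (y : EuclideanSpace ℝ (Fin d))
    (hy : ∀ p ∈ Pb, ⟪p, y⟫ ≤ g p + ε * ‖p‖) :
    ∃ z, (∀ p ∈ Pb, ⟪p, z⟫ ≤ g p) ∧ dist y z ≤ ε := by
  classical
  set Yg : Set (EuclideanSpace ℝ (Fin d)) := {z | ∀ p ∈ Pb, ⟪p, z⟫ ≤ g p} with hYg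
  have hYgclosed : IsClosed Yg := by
    have : Yg = ⋂ p ∈ Pb, {z : EuclideanSpace ℝ (Fin d) | ⟪p, z⟫ ≤ g p} := by
      ext w; simp [hYg, Set.mem_iInter]
    rw [this]
    exact isClosed_biInter fun p hp =>
      isClosed_le (Continuous.inner continuous_const continuous_id) continuous_const
  have hYgconv : Convex ℝ Yg := by
    intro z1 h1 z2 h2 a b ha hb hab p hp
    have e1 : ⟪p, a • z1 + b • z2⟫ = a * ⟪p, z1⟫ + b * ⟪p, z2⟫ := by
      rw [inner_add_right, real_inner_smul_right, real_inner_smul_right]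
    rw [e1]
    have e2 := mul_le_mul_of_nonneg_left (h1 p hp) ha
    have e3 := mul_le_mul_of_nonneg_left (h2 p hp) hb
    have e4 : a * g p + b * g p = g p := by rw [← add_mul, hab, one_mul]
    linarith
  obtain ⟨q0, hq0⟩ := hPbne
  obtain ⟨z0, hz01, _⟩ := exists_support_point g hgconv hgcont hghom (hPbpos hq0)
  have hYgne : Yg.Nonempty := ⟨z0, fun p hp => hz01 p (hPbpos hp)⟩
  obtain ⟨z, hzY, hmin⟩ :=
    exists_norm_eq_iInf_of_complete_convex hYgne (hYgclosed.isComplete) hYgconv y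
  have normal : ∀ w ∈ Yg, ⟪y - z, w - z⟫ ≤ 0 :=
    (norm_eq_iInf_iff_real_inner_le_zero hYgconv hzY).1 hmin
  by_cases hv0 : y - z = 0
  · refine ⟨z, hzY, ?_⟩
    rw [dist_eq_norm, hv0, norm_zero]; exact hε0
  -- the cone generated by Pb
  set C : Set (EuclideanSpace ℝ (Fin d)) :=
    {c | ∃ l : ℝ, 0 ≤ l ∧ ∃ p ∈ Pb, c = l • p} with hC
  have hCconv : Convex ℝ C := by
    rintro c1 ⟨l1, hl1, p1, hp1, rfl⟩ c2 ⟨l2, hl2, p2, hp2, rfl⟩ a b ha hb hab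
    have hal : 0 ≤ a * l1 := mul_nonneg ha hl1
    have hbl : 0 ≤ b * l2 := mul_nonneg hb hl2
    rcases eq_or_lt_of_le (add_nonneg hal hbl) with hmu | hmu
    · have h1 : a * l1 = 0 := by linarith
      have h2 : b * l2 = 0 := by linarith
      refine ⟨0, le_refl 0, p1, hp1, ?_⟩
      rw [smul_smul, smul_smul, h1, h2]
      simp
    · set μ := a * l1 + b * l2 with hμ
      have hμne : μ ≠ 0 := ne_of_gt hmu
      refine ⟨μ, hmu.le, (a * l1 / μ) • p1 + (b * l2 / μ) • p2, ?_, ?_⟩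
      · exact hPbconv hp1 hp2 (div_nonneg hal hmu.le) (div_nonneg hbl hmu.le)
          (by field_simp; exact hμ.symm)
      · rw [smul_add, smul_smul, smul_smul, smul_smul, smul_smul]
        congr 1 <;> congr 1 <;> field_simp <;> ring
  have hCclosed : IsClosed C := by
    obtain ⟨m, hmpos, hm⟩ : ∃ m > 0, ∀ p ∈ Pb, m ≤ ‖p‖ := by
      obtain ⟨p₀, hp₀, _, hge⟩ :=
        hPbcomp.exists_sInf_image_eq_and_le ⟨q0, hq0⟩ continuous_norm.continuousOn
      exact ⟨‖p₀‖, posOrthant_norm_pos hd (hPbpos hp₀), fun p hp => hge p hp⟩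
    refine IsSeqClosed.isClosed ?_
    intro x xlim hx hlim
    choose l hl p hp hxe using hx
    obtain ⟨B, hB⟩ : ∃ B, ∀ n, ‖x n‖ ≤ B := by
      obtain ⟨B, hB⟩ := hlim.norm.bddAbove_range
      exact ⟨B, fun n => hB ⟨n, rfl⟩⟩
    have hlB : ∀ n, l n ≤ B / m := by
      intro n
      have h1 : ‖x n‖ = l n * ‖p n‖ := by
        rw [hxe n, norm_smul, Real.norm_eq_abs, abs_of_nonneg (hl n)]
      have h2 : l n * m ≤ l n * ‖p n‖ :=
        mul_le_mul_of_nonneg_left (hm _ (hp n)) (hl n)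
      rw [le_div_iff₀ hmpos]
      nlinarith [hB n]
    have hmemK : ∀ n, ((l n, p n) : ℝ × EuclideanSpace ℝ (Fin d)) ∈
        Set.Icc (0:ℝ) (B / m) ×ˢ Pb := fun n => ⟨⟨hl n, hlB n⟩, hp n⟩
    obtain ⟨⟨linf, pinf⟩, ⟨hlinf, hpinf⟩, φ, hφ, hconv2⟩ :=
      ((isCompact_Icc).prod hPbcomp).tendsto_subseq hmemK
    have hlt : Filter.Tendsto (fun n => l (φ n)) Filter.atTop (𝓝 linf) :=
      (continuous_fst.tendsto _).comp hconv2
    have hpt : Filter.Tendsto (fun n => p (φ n)) Filter.atTop (𝓝 pinf) :=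
      (continuous_snd.tendsto _).comp hconv2
    have hxt : Filter.Tendsto (fun n => x (φ n)) Filter.atTop (𝓝 (linf • pinf)) := by
      have := hlt.smul hpt
      simpa [fun n => hxe (φ n)] using this
    have hxt' : Filter.Tendsto (fun n => x (φ n)) Filter.atTop (𝓝 xlim) :=
      hlim.comp (hφ.tendsto_atTop)
    have : xlim = linf • pinf := tendsto_nhds_unique hxt' hxt
    exact ⟨linf, hlinf.1, pinf, hpinf, this⟩
  have hvC : y - z ∈ C := by
    by_contra hnot
    obtain ⟨L, u, hLC, hLv⟩ := geometric_hahn_banach_closed_point hCconv hCclosed hnot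
    have h0C : (0 : EuclideanSpace ℝ (Fin d)) ∈ C := ⟨0, le_refl 0, q0, hq0, by simp⟩
    have hu0 : 0 < u := by have := hLC 0 h0C; simpa using this
    have hLle : ∀ a ∈ C, L a ≤ 0 := by
      intro a ha
      by_contra hpos
      push_neg at hpos
      obtain ⟨l, hl, p, hp, rfl⟩ := ha
      have hmem : ((u + 1) / L (l • p)) • (l • p) ∈ C :=
        ⟨(u + 1) / L (l • p) * l,
          mul_nonneg (div_nonneg (by linarith) hpos.le) hl, p, hp, by rw [smul_smul]⟩
      have hlt2 := hLC _ hmem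
      rw [map_smul, smul_eq_mul, div_mul_cancel₀ _ (ne_of_gt hpos)] at hlt2
      linarith
    set wv := (InnerProductSpace.toDual ℝ (EuclideanSpace ℝ (Fin d))).symm L with hwvdef
    have hwv : ∀ x, ⟪wv, x⟫ = L x := fun x => InnerProductSpace.toDual_symm_apply
    have hzw : z + wv ∈ Yg := by
      intro p hp
      have h1 : ⟪p, z + wv⟫ = ⟪p, z⟫ + ⟪p, wv⟫ := inner_add_right _ _ _
      have h2 : ⟪p, wv⟫ = L p := by rw [real_inner_comm]; exact hwv p
      have h3 : L p ≤ 0 := hLle p ⟨1, zero_le_one, p, hp, (one_smul _ _).symm⟩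
      have h4 := hzY p hp
      rw [h1, h2]; linarith
    have h5 := normal _ hzw
    rw [add_sub_cancel_left, real_inner_comm, hwv] at h5
    linarith
  obtain ⟨l, hl0, q, hqPb, hveq⟩ := hvC
  have hlpos : 0 < l := by
    rcases eq_or_lt_of_le hl0 with h | h
    · exfalso; apply hv0; rw [hveq, ← h, zero_smul]
    · exact h
  obtain ⟨zq, hzq1, hzq2⟩ := exists_support_point g hgconv hgcont hghom (hPbpos hqPb)
  have hzqY : zq ∈ Yg := fun p hp => hzq1 p (hPbpos hp)
  have hn := normal zq hzqY
  have hnorm_pos : 0 < ‖y - z‖ := norm_pos_iff.mpr hv0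
  have key : ‖y - z‖ ^ 2 ≤ ε * ‖y - z‖ := by
    have e1 : ⟪y - z, y - z⟫ = ‖y - z‖ ^ 2 := real_inner_self_eq_norm_sq _
    have e2 : ⟪y - z, y - z⟫ = ⟪y - z, y⟫ - ⟪y - z, z⟫ := inner_sub_right _ _ _
    have e3 : ⟪y - z, y⟫ = l * ⟪q, y⟫ := by rw [hveq, real_inner_smul_left]
    have e4 : ⟪q, y⟫ ≤ g q + ε * ‖q‖ := hy q hqPb
    have e5 : ⟪y - z, zq⟫ ≤ ⟪y - z, z⟫ := by
      have h6 : ⟪y - z, zq - z⟫ = ⟪y - z, zq⟫ - ⟪y - z, z⟫ := inner_sub_right _ _ _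
      rw [h6] at hn; linarith
    have e6 : ⟪y - z, zq⟫ = l * g q := by
      rw [hveq, real_inner_smul_left, hzq2]
    have e7 : ‖y - z‖ = l * ‖q‖ := by
      rw [hveq, norm_smul, Real.norm_eq_abs, abs_of_pos hlpos]
    have e8 : l * ⟪q, y⟫ ≤ l * (g q + ε * ‖q‖) := mul_le_mul_of_nonneg_left e4 hl0
    nlinarith
  refine ⟨z, hzY, ?_⟩
  rw [dist_eq_norm]
  nlinarith

/-- Deterministic content of Theorem 7.1: the Hausdorff distance between the
production sets induced by two convex, continuous, positively homogeneous degree-1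
profit functions over a nonempty convex compact price set `P̄ ⊆ ℝ^d_{++}` equals the
sup of `|π(p) − π̂(p)|/‖p‖` over `P̄`. -/
theorem stmt6 (d : ℕ) (hd : 2 ≤ d)
    (prof profhat : EuclideanSpace ℝ (Fin d) → ℝ)
    (hconv : ConvexOn ℝ (posOrthant d) prof)
    (hhatconv : ConvexOn ℝ (posOrthant d) profhat)
    (hcont : ContinuousOn prof (posOrthant d))
    (hhatcont : ContinuousOn profhat (posOrthant d))
    (hhom : ∀ p ∈ posOrthant d, ∀ l : ℝ, 0 < l → prof (l • p) = l * prof p)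
    (hhathom : ∀ p ∈ posOrthant d, ∀ l : ℝ, 0 < l → profhat (l • p) = l * profhat p)
    (Pb : Set (EuclideanSpace ℝ (Fin d))) (hPbne : Pb.Nonempty)
    (hPbconv : Convex ℝ Pb) (hPbcomp : IsCompact Pb) (hPbpos : Pb ⊆ posOrthant d) :
    Metric.hausdorffDist
        {y : EuclideanSpace ℝ (Fin d) | ∀ p ∈ Pb, ⟪p, y⟫ ≤ prof p}
        {y : EuclideanSpace ℝ (Fin d) | ∀ p ∈ Pb, ⟪p, y⟫ ≤ profhat p}
      = sSup ((fun p => |prof p - profhat p| / ‖p‖) '' Pb) := by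
  classical
  have hd1 : 1 ≤ d := le_trans (by norm_num) hd
  set Y := {y : EuclideanSpace ℝ (Fin d) | ∀ p ∈ Pb, ⟪p, y⟫ ≤ prof p} with hY
  set Yh := {y : EuclideanSpace ℝ (Fin d) | ∀ p ∈ Pb, ⟪p, y⟫ ≤ profhat p} with hYh
  set F : EuclideanSpace ℝ (Fin d) → ℝ := fun p => |prof p - profhat p| / ‖p‖ with hF
  have hFcont : ContinuousOn F Pb := by
    apply ContinuousOn.div
    · exact ((hcont.mono hPbpos).sub (hhatcont.mono hPbpos)).abs
    · exact continuous_norm.continuousOn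
    · exact fun p hp => ne_of_gt (posOrthant_norm_pos hd1 (hPbpos hp))
  obtain ⟨qs, hqs, hSup, hmax⟩ := hPbcomp.exists_sSup_image_eq_and_ge hPbne hFcont
  set ε := sSup (F '' Pb) with hε
  have hε0 : 0 ≤ ε := by rw [hSup]; exact div_nonneg (abs_nonneg _) (norm_nonneg _)
  have hbound : ∀ p ∈ Pb, |prof p - profhat p| ≤ ε * ‖p‖ := by
    intro p hp
    have h1 : |prof p - profhat p| / ‖p‖ ≤ ε := by rw [hSup]; exact hmax p hp
    have h2 : 0 < ‖p‖ := posOrthant_norm_pos hd1 (hPbpos hp)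
    exact (div_le_iff₀ h2).1 h1
  have dir1 : ∀ x ∈ Y, ∃ z ∈ Yh, dist x z ≤ ε := by
    intro x hx
    obtain ⟨z, hz, hdist⟩ := exists_close_point hd1 profhat hhatconv hhatcont hhathom Pb
      hPbne hPbconv hPbcomp hPbpos hε0 x (fun p hp => by
        have h1 := hx p hp
        have h2 := hbound p hp
        have h3 : prof p - profhat p ≤ |prof p - profhat p| := le_abs_self _
        linarith)
    exact ⟨z, hz, hdist⟩
  have dir2 : ∀ x ∈ Yh, ∃ z ∈ Y, dist x z ≤ ε := by
    intro x hx
    obtain ⟨z, hz, hdist⟩ := exists_close_point hd1 prof hconv hcont hhom Pb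
      hPbne hPbconv hPbcomp hPbpos hε0 x (fun p hp => by
        have h1 := hx p hp
        have h2 := hbound p hp
        have h3 : profhat p - prof p ≤ |prof p - profhat p| := by
          rw [abs_sub_comm]; exact le_abs_self _
        linarith)
    exact ⟨z, hz, hdist⟩
  have hedist : EMetric.hausdorffEdist Y Yh ≠ ⊤ := by
    have hle : EMetric.hausdorffEdist Y Yh ≤ ENNReal.ofReal ε := by
      apply EMetric.hausdorffEdist_le_of_mem_edist
      · intro x hx
        obtain ⟨z, hz, hdist⟩ := dir1 x hx
        exact ⟨z, hz, by rw [edist_dist]; exact ENNReal.ofReal_le_ofReal hdist⟩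
      · intro x hx
        obtain ⟨z, hz, hdist⟩ := dir2 x hx
        exact ⟨z, hz, by rw [edist_dist]; exact ENNReal.ofReal_le_ofReal hdist⟩
    exact ne_top_of_le_ne_top ENNReal.ofReal_ne_top hle
  have hle : Metric.hausdorffDist Y Yh ≤ ε :=
    Metric.hausdorffDist_le_of_mem_dist hε0 dir1 dir2
  have hYhne : Yh.Nonempty := by
    obtain ⟨z, hz1, _⟩ := exists_support_point profhat hhatconv hhatcont hhathom (hPbpos hqs)
    exact ⟨z, fun p hp => hz1 p (hPbpos hp)⟩
  have hYne : Y.Nonempty := by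
    obtain ⟨z, hz1, _⟩ := exists_support_point prof hconv hcont hhom (hPbpos hqs)
    exact ⟨z, fun p hp => hz1 p (hPbpos hp)⟩
  have hqn : 0 < ‖qs‖ := posOrthant_norm_pos hd1 (hPbpos hqs)
  have hge : ε ≤ Metric.hausdorffDist Y Yh := by
    rw [hSup]
    rcases le_or_gt (profhat qs) (prof qs) with hcase | hcase
    · obtain ⟨z, hz1, hz2⟩ := exists_support_point prof hconv hcont hhom (hPbpos hqs)
      have hzY : z ∈ Y := fun p hp => hz1 p (hPbpos hp)
      have hinf : F qs ≤ Metric.infDist z Yh := by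
        by_contra hcon
        push_neg at hcon
        obtain ⟨w, hw, hdw⟩ := (Metric.infDist_lt_iff hYhne).1 hcon
        have h2 : ⟪qs, w⟫ ≤ profhat qs := hw qs hqs
        have h3 : ⟪qs, z - w⟫ ≤ ‖qs‖ * ‖z - w‖ := real_inner_le_norm _ _
        have h4 : ⟪qs, z - w⟫ = ⟪qs, z⟫ - ⟪qs, w⟫ := inner_sub_right _ _ _
        have h5 : dist z w = ‖z - w‖ := dist_eq_norm _ _
        have hFqs : F qs = (prof qs - profhat qs) / ‖qs‖ := by
          rw [hF]; simp only; rw [abs_of_nonneg (by linarith)]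
        rw [hFqs, lt_div_iff₀ hqn] at hdw
        nlinarith
      exact le_trans hinf (Metric.infDist_le_hausdorffDist_of_mem hzY hedist)
    · obtain ⟨z, hz1, hz2⟩ := exists_support_point profhat hhatconv hhatcont hhathom (hPbpos hqs)
      have hzYh : z ∈ Yh := fun p hp => hz1 p (hPbpos hp)
      have hinf : F qs ≤ Metric.infDist z Y := by
        by_contra hcon
        push_neg at hcon
        obtain ⟨w, hw, hdw⟩ := (Metric.infDist_lt_iff hYne).1 hcon
        have h2 : ⟪qs, w⟫ ≤ prof qs := hw qs hqs
        have h3 : ⟪qs, z - w⟫ ≤ ‖qs‖ * ‖z - w‖ := real_inner_le_norm _ _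
        have h4 : ⟪qs, z - w⟫ = ⟪qs, z⟫ - ⟪qs, w⟫ := inner_sub_right _ _ _
        have h5 : dist z w = ‖z - w‖ := dist_eq_norm _ _
        have hFqs : F qs = (profhat qs - prof qs) / ‖qs‖ := by
          rw [hF]; simp only; rw [abs_sub_comm, abs_of_nonneg (by linarith)]
        rw [hFqs, lt_div_iff₀ hqn] at hdw
        nlinarith
      exact le_trans hinf ((Metric.infDist_le_hausdorffDist_of_mem hzYh
        (by rw [EMetric.hausdorffEdist_comm]; exact hedist)).trans_eq
        Metric.hausdorffDist_comm)
  exact le_antisymm hle hge
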